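/- For η(v,u,S) = C₃(ε(v,S) + u²/2) + H(S) with ε_vv > 0 and ε_vv·ε_SS − ε_vS² > 0 (thermodynamic stability), the Hessian D²η with respect to (v,u,S) is positive definite if and only if C₃ > 0 and H''(S) > −(C₃/ε_vv)(ε_vv·ε_SS − ε_vS²) for all (v,S). -/

import Mathlib

open Matrix ContinuousLinearMap

noncomputable def hmat {n : ℕ} (η : (Fin n → ℝ) → ℝ) (u : Fin n → ℝ) :
    Matrix (Fin n) (Fin n) ℝ :=
  Matrix.of fun i j => fderiv ℝ (fun w => fderiv ℝ η w (Pi.single i 1)) u (Pi.single j 1)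

noncomputable def Lmap : (Fin 3 → ℝ) →L[ℝ] ℝ × ℝ :=
  (ContinuousLinearMap.proj 0).prod (ContinuousLinearMap.proj 2)

lemma posdef3 (a b c d : ℝ) :
    (Matrix.of ![![a,0,b], ![0,c,0], ![b,0,d]]).PosDef ↔
      0 < a ∧ 0 < c ∧ 0 < a * d - b ^ 2 := by
  rw [Matrix.posDef_iff_dotProduct_mulVec]
  constructor
  · intro h
    have h1 := h.2 (x := ![1,0,0]) (by intro hc; simpa using congrFun hc 0)
    have h2 := h.2 (x := ![0,1,0]) (by intro hc; simpa using congrFun hc 1)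
    simp [Matrix.mulVec, dotProduct, Fin.sum_univ_three] at h1 h2
    have ha : 0 < a := by simpa using h1
    have hcc : 0 < c := by simpa using h2
    refine ⟨ha, hcc, ?_⟩
    have h3 := h.2 (x := ![b,0,-a]) (by intro hcon; have := congrFun hcon 2; simp at this; linarith)
    simp [Matrix.mulVec, dotProduct, Fin.sum_univ_three] at h3
    nlinarith [h3]
  · rintro ⟨ha, hc, hd⟩
    refine ⟨?_, ?_⟩
    · ext i j
      fin_cases i <;> fin_cases j <;> simp [Matrix.conjTranspose_apply]
    · intro x hx
      have hq : star x ⬝ᵥ (Matrix.of ![![a,0,b], ![0,c,0], ![b,0,d]]) *ᵥ x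
          = a * x 0 ^ 2 + c * x 1 ^ 2 + d * x 2 ^ 2 + 2 * b * (x 0 * x 2) := by
        simp [Matrix.mulVec, dotProduct, Fin.sum_univ_three]; ring
      have hx' : x 0 ≠ 0 ∨ x 1 ≠ 0 ∨ x 2 ≠ 0 := by
        by_contra hcon
        push_neg at hcon
        apply hx
        ext i; fin_cases i <;> simp [hcon.1, hcon.2.1, hcon.2.2]
      rw [hq]
      have key : a * (a * x 0 ^ 2 + c * x 1 ^ 2 + d * x 2 ^ 2 + 2 * b * (x 0 * x 2))
          = (a * x 0 + b * x 2) ^ 2 + (a * d - b ^ 2) * x 2 ^ 2 + a * c * x 1 ^ 2 := by ring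
      have hpos : 0 < a * (a * x 0 ^ 2 + c * x 1 ^ 2 + d * x 2 ^ 2 + 2 * b * (x 0 * x 2)) := by
        rw [key]
        rcases hx' with h0 | h1 | h2
        · rcases eq_or_ne (x 2) 0 with h2 | h2
          · have : (a * x 0 + b * x 2) ^ 2 = (a * x 0) ^ 2 := by rw [h2]; ring
            nlinarith [sq_pos_of_ne_zero h0, mul_pos ha ha, sq_nonneg (x 1),
              mul_nonneg (mul_pos ha hc).le (sq_nonneg (x 1)), sq_nonneg (x 2),
              mul_nonneg hd.le (sq_nonneg (x 2)), mul_pos (mul_pos ha ha) (sq_pos_of_ne_zero h0)]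
          · nlinarith [sq_nonneg (a * x 0 + b * x 2), mul_pos hd (sq_pos_of_ne_zero h2),
              mul_nonneg (mul_pos ha hc).le (sq_nonneg (x 1))]
        · nlinarith [sq_nonneg (a * x 0 + b * x 2), mul_nonneg hd.le (sq_nonneg (x 2)),
            mul_pos (mul_pos ha hc) (sq_pos_of_ne_zero h1)]
        · nlinarith [sq_nonneg (a * x 0 + b * x 2), mul_pos hd (sq_pos_of_ne_zero h2),
            mul_nonneg (mul_pos ha hc).le (sq_nonneg (x 1))]
      nlinarith [hpos, ha]

/-- Convexity criterion for Euler entropies: under thermodynamic stability,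
`η(v,u,S) = C₃(ε + u²/2) + H(S)` has positive definite Hessian iff `C₃ > 0` and
`H''(S) > −(C₃/ε_vv)(ε_vv ε_SS − ε_vS²)` for all `(v,S)`. -/
theorem stmt16 (ε : ℝ × ℝ → ℝ) (hε : ContDiff ℝ 3 ε)
    (H : ℝ → ℝ) (hH : ContDiff ℝ 2 H) (C3 : ℝ)
    (εvv εvS εSS : ℝ × ℝ → ℝ)
    (hεvv : ∀ x, εvv x = fderiv ℝ (fun y => fderiv ℝ ε y (1, 0)) x (1, 0))
    (hεvS : ∀ x, εvS x = fderiv ℝ (fun y => fderiv ℝ ε y (1, 0)) x (0, 1))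
    (hεSS : ∀ x, εSS x = fderiv ℝ (fun y => fderiv ℝ ε y (0, 1)) x (0, 1))
    (hstab1 : ∀ x, 0 < εvv x)
    (hstab2 : ∀ x, 0 < εvv x * εSS x - (εvS x) ^ 2)
    (η : (Fin 3 → ℝ) → ℝ)
    (hηdef : ∀ w, η w = C3 * (ε (w 0, w 2) + (w 1) ^ 2 / 2) + H (w 2)) :
    (∀ w, (hmat η w).PosDef) ↔
      (0 < C3 ∧ ∀ v S : ℝ,
        deriv (deriv H) S >
          -(C3 / εvv (v, S)) * (εvv (v, S) * εSS (v, S) - (εvS (v, S)) ^ 2)) := by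
  have hkey : ∀ w : Fin 3 → ℝ, hmat η w = Matrix.of
      ![![C3 * εvv (w 0, w 2), 0, C3 * εvS (w 0, w 2)],
        ![0, C3, 0],
        ![C3 * εvS (w 0, w 2), 0, C3 * εSS (w 0, w 2) + deriv (deriv H) (w 2)]] := by
    have hεd : Differentiable ℝ ε := hε.differentiable (by norm_num)
    have hHd : Differentiable ℝ H := hH.differentiable (by norm_num)
    have hε2 : ContDiff ℝ 2 (fun y => fderiv ℝ ε y) := hε.fderiv_right (by norm_num)
    have happ : ∀ v : ℝ × ℝ, Differentiable ℝ (fun y => fderiv ℝ ε y v) :=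
      fun v => ((hε2.of_le one_le_two).clm_apply contDiff_const).differentiable (by norm_num)
    have hH1 : ContDiff ℝ 1 (deriv H) := by
      have := (contDiff_succ_iff_deriv (n := 1) (f := H)).mp (by exact_mod_cast hH)
      exact this.2.2
    have hHd2 : Differentiable ℝ (deriv H) := hH1.differentiable (by norm_num)
    set p1 : (Fin 3 → ℝ) →L[ℝ] ℝ := ContinuousLinearMap.proj 1 with hp1
    set p2 : (Fin 3 → ℝ) →L[ℝ] ℝ := ContinuousLinearMap.proj 2 with hp2
    -- first derivative
    have hη' : ∀ w : Fin 3 → ℝ, HasFDerivAt η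
        (C3 • ((fderiv ℝ ε (w 0, w 2)).comp Lmap) + ((C3 * w 1) • p1 + (deriv H (w 2)) • p2)) w := by
      intro w
      have hA : HasFDerivAt (fun w : Fin 3 → ℝ => ε (w 0, w 2))
          ((fderiv ℝ ε (w 0, w 2)).comp Lmap) w :=
        (hεd (w 0, w 2)).hasFDerivAt.comp w Lmap.hasFDerivAt
      have hB : HasFDerivAt (fun w : Fin 3 → ℝ => (w 1) ^ 2 / 2) ((w 1) • p1) w := by
        have hp : HasFDerivAt (fun w : Fin 3 → ℝ => w 1) p1 w := p1.hasFDerivAt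
        have h2 := (hp.mul hp).const_mul (2⁻¹ : ℝ)
        have e1 : (fun w : Fin 3 → ℝ => (w 1) ^ 2 / 2)
            = fun y => 2⁻¹ * ((fun w : Fin 3 → ℝ => w 1) * fun w : Fin 3 → ℝ => w 1) y := by
          funext y; simp only [Pi.mul_apply]; ring
        rw [e1]; exact h2.congr_fderiv (by
          ext y; simp only [ContinuousLinearMap.smul_apply, ContinuousLinearMap.add_apply, smul_eq_mul]; ring)
      have hC : HasFDerivAt (fun w : Fin 3 → ℝ => H (w 2)) ((deriv H (w 2)) • p2) w :=
        ((hHd (w 2)).hasDerivAt).comp_hasFDerivAt w p2.hasFDerivAt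
      have hsum := ((hA.add hB).const_mul C3).add hC
      have hfun : η = fun w : Fin 3 → ℝ => C3 * (ε (w 0, w 2) + (w 1) ^ 2 / 2) + H (w 2) :=
        funext hηdef
      rw [hfun]
      exact hsum.congr_fderiv (by rw [smul_add, add_assoc, mul_smul])
    have hfd : ∀ (w v : Fin 3 → ℝ), fderiv ℝ η w v
        = C3 * fderiv ℝ ε (w 0, w 2) (v 0, v 2) + (C3 * w 1 * v 1 + deriv H (w 2) * v 2) := by
      intro w v
      rw [(hη' w).fderiv]
      simp [hp1, hp2, Lmap, mul_assoc]
    -- the three directional first derivatives as functions of w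
    have g0 : (fun w : Fin 3 → ℝ => fderiv ℝ η w (Pi.single 0 1))
        = fun w => C3 * fderiv ℝ ε (w 0, w 2) (1, 0) := by
      funext w; rw [hfd]; simp
    have g1 : (fun w : Fin 3 → ℝ => fderiv ℝ η w (Pi.single 1 1)) = fun w => C3 * w 1 := by
      funext w; rw [hfd]
      have : ((0 : ℝ), (0 : ℝ)) = (0 : ℝ × ℝ) := rfl
      simp [this]
    have g2 : (fun w : Fin 3 → ℝ => fderiv ℝ η w (Pi.single 2 1))
        = fun w => C3 * fderiv ℝ ε (w 0, w 2) (0, 1) + deriv H (w 2) := by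
      funext w; rw [hfd]; simp
    -- second derivative of the ε-terms
    have hG : ∀ (v : ℝ × ℝ) (w : Fin 3 → ℝ),
        HasFDerivAt (fun w : Fin 3 → ℝ => C3 * fderiv ℝ ε (w 0, w 2) v)
          (C3 • ((fderiv ℝ (fun y => fderiv ℝ ε y v) (w 0, w 2)).comp Lmap)) w :=
      fun v w => (((happ v) (w 0, w 2)).hasFDerivAt.comp w Lmap.hasFDerivAt).const_mul C3
    -- symmetry of mixed second derivatives
    have hsym : ∀ x : ℝ × ℝ, fderiv ℝ (fun y => fderiv ℝ ε y ((0:ℝ),(1:ℝ))) x (1,0)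
        = fderiv ℝ (fun y => fderiv ℝ ε y ((1:ℝ),(0:ℝ))) x (0,1) := by
      intro x
      have hf : ∀ y, HasFDerivAt ε (fderiv ℝ ε y) y := fun y => (hεd y).hasFDerivAt
      have hd2 : Differentiable ℝ (fderiv ℝ ε) := hε2.differentiable (by norm_num)
      have hx : HasFDerivAt (fderiv ℝ ε) (fderiv ℝ (fderiv ℝ ε) x) x := (hd2 x).hasFDerivAt
      have hswap := second_derivative_symmetric hf hx (1,0) (0,1)
      have hrel : ∀ v u : ℝ × ℝ,
          fderiv ℝ (fun y => fderiv ℝ ε y v) x u = fderiv ℝ (fderiv ℝ ε) x u v := by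
        intro v u
        have hc : HasFDerivAt (fun y => fderiv ℝ ε y v)
            ((ContinuousLinearMap.apply ℝ ℝ v).comp (fderiv ℝ (fderiv ℝ ε) x)) x :=
          (ContinuousLinearMap.apply ℝ ℝ v).hasFDerivAt.comp x hx
        rw [hc.fderiv]; rfl
      rw [hrel, hrel, hswap]
    -- assemble the matrix
    intro w
    have hr0 := (hG (1,0) w).fderiv
    have hr1 : fderiv ℝ (fun w : Fin 3 → ℝ => C3 * w 1) w = C3 • p1 :=
      ((p1.hasFDerivAt (x := w)).const_mul C3).fderiv
    have hr2 : fderiv ℝ (fun w : Fin 3 → ℝ => C3 * fderiv ℝ ε (w 0, w 2) ((0:ℝ),(1:ℝ)) + deriv H (w 2)) w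
        = C3 • (fderiv ℝ (fun y => fderiv ℝ ε y ((0:ℝ),(1:ℝ))) (w 0, w 2)).comp Lmap
          + deriv (deriv H) (w 2) • p2 :=
      by have h := ((hG (0,1) w).add (((hHd2 (w 2)).hasDerivAt).comp_hasFDerivAt w p2.hasFDerivAt)).fderiv; exact h
    have h00 : ((0:ℝ),(0:ℝ)) = (0:ℝ×ℝ) := rfl
    have E00 : fderiv ℝ (fun w : Fin 3 → ℝ => fderiv ℝ η w (Pi.single 0 1)) w (Pi.single 0 1)
        = C3 * fderiv ℝ (fun y => fderiv ℝ ε y ((1:ℝ),(0:ℝ))) (w 0, w 2) (1,0) := by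
      rw [g0, hr0]; simp [Lmap]
    have E01 : fderiv ℝ (fun w : Fin 3 → ℝ => fderiv ℝ η w (Pi.single 0 1)) w (Pi.single 1 1)
        = 0 := by
      rw [g0, hr0]; simp [Lmap, h00]
    have E02 : fderiv ℝ (fun w : Fin 3 → ℝ => fderiv ℝ η w (Pi.single 0 1)) w (Pi.single 2 1)
        = C3 * fderiv ℝ (fun y => fderiv ℝ ε y ((1:ℝ),(0:ℝ))) (w 0, w 2) (0,1) := by
      rw [g0, hr0]; simp [Lmap]
    have E10 : fderiv ℝ (fun w : Fin 3 → ℝ => fderiv ℝ η w (Pi.single 1 1)) w (Pi.single 0 1)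
        = 0 := by
      rw [g1, hr1]; simp [hp1]
    have E11 : fderiv ℝ (fun w : Fin 3 → ℝ => fderiv ℝ η w (Pi.single 1 1)) w (Pi.single 1 1)
        = C3 := by
      rw [g1, hr1]; simp [hp1]
    have E12 : fderiv ℝ (fun w : Fin 3 → ℝ => fderiv ℝ η w (Pi.single 1 1)) w (Pi.single 2 1)
        = 0 := by
      rw [g1, hr1]; simp [hp1]
    have E20 : fderiv ℝ (fun w : Fin 3 → ℝ => fderiv ℝ η w (Pi.single 2 1)) w (Pi.single 0 1)
        = C3 * fderiv ℝ (fun y => fderiv ℝ ε y ((1:ℝ),(0:ℝ))) (w 0, w 2) (0,1) := by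
      rw [g2, hr2]; simp [Lmap, hp2, hsym (w 0, w 2)]
    have E21 : fderiv ℝ (fun w : Fin 3 → ℝ => fderiv ℝ η w (Pi.single 2 1)) w (Pi.single 1 1)
        = 0 := by
      rw [g2, hr2]; simp [Lmap, hp2, h00]
    have E22 : fderiv ℝ (fun w : Fin 3 → ℝ => fderiv ℝ η w (Pi.single 2 1)) w (Pi.single 2 1)
        = C3 * fderiv ℝ (fun y => fderiv ℝ ε y ((0:ℝ),(1:ℝ))) (w 0, w 2) (0,1) + deriv (deriv H) (w 2) := by
      rw [g2, hr2]; simp [Lmap, hp2]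
    show (Matrix.of fun i j => fderiv ℝ (fun w => fderiv ℝ η w (Pi.single i 1)) w (Pi.single j 1)) = _
    ext i j
    fin_cases i <;> fin_cases j
    · rw [hεvv]; exact E00
    · exact E01
    · rw [hεvS]; exact E02
    · exact E10
    · exact E11
    · exact E12
    · rw [hεvS]; exact E20
    · exact E21
    · rw [hεSS]; exact E22
  constructor
  · intro h
    have hp0 := h (fun _ => 0)
    rw [hkey, posdef3] at hp0
    have hC3 : 0 < C3 := hp0.2.1
    refine ⟨hC3, fun v S => ?_⟩
    have hpw := h ![v, 0, S]
    rw [hkey, posdef3] at hpw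
    have hw0 : (![v, 0, S] : Fin 3 → ℝ) 0 = v := rfl
    have hw2 : (![v, 0, S] : Fin 3 → ℝ) 2 = S := rfl
    rw [hw0, hw2] at hpw
    have h3 := hpw.2.2
    have hv := hstab1 (v, S)
    have heq : -(C3 / εvv (v, S)) * (εvv (v, S) * εSS (v, S) - (εvS (v, S)) ^ 2)
        = (-(C3 * (εvv (v, S) * εSS (v, S) - (εvS (v, S)) ^ 2))) / εvv (v, S) := by
      field_simp
    rw [gt_iff_lt, heq, div_lt_iff₀ hv]
    nlinarith [h3, hC3, hv]
  · rintro ⟨hC3, hH2⟩ w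
    rw [hkey, posdef3]
    have hv := hstab1 (w 0, w 2)
    have hs := hstab2 (w 0, w 2)
    have hd := hH2 (w 0) (w 2)
    have heq : -(C3 / εvv (w 0, w 2)) * (εvv (w 0, w 2) * εSS (w 0, w 2) - (εvS (w 0, w 2)) ^ 2)
        = (-(C3 * (εvv (w 0, w 2) * εSS (w 0, w 2) - (εvS (w 0, w 2)) ^ 2))) / εvv (w 0, w 2) := by
      field_simp
    rw [gt_iff_lt, heq, div_lt_iff₀ hv] at hd
    refine ⟨mul_pos hC3 hv, hC3, ?_⟩
    nlinarith [hd, hC3, hv]
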